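/- Let G be a 4-partite graph with parts V1, V2, V3, V4 where |V1| = 1, such that for every pair i ≠ j the edge density d(V_i,V_j) = e(V_i,V_j)/(|V_i||V_j|) is strictly greater than 1/2. Then G contains a triangle. -/
import Mathlib

open SimpleGraph Finset

set_option linter.unusedSectionVars false
set_option linter.unusedVariables false

section TriangleAux

variable {α : Type*} [Fintype α] [DecidableEq α]

/-- number of edges between `s` and `t`, counted from `s`. -/
private def EE (G : SimpleGraph α) [DecidableRel G.Adj] (s t : Finset α) : ℕ :=
  ∑ z ∈ s, (t.filter (G.Adj z)).card

private lemma EE_comm (G : SimpleGraph α) [DecidableRel G.Adj] (s t : Finset α) :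
    EE G s t = EE G t s := by
  unfold EE
  simp_rw [Finset.card_filter]
  rw [Finset.sum_comm]
  exact Finset.sum_congr rfl fun u _ => Finset.sum_congr rfl fun z _ =>
    if_congr (G.adj_comm z u) rfl rfl

private lemma card_interedges_eq (G : SimpleGraph α) [DecidableRel G.Adj] (s t : Finset α) :
    (Rel.interedges G.Adj s t).card = EE G s t := by
  unfold EE
  rw [Rel.interedges, Finset.card_filter, Finset.sum_product]
  exact Finset.sum_congr rfl fun z _ => (Finset.card_filter _ _).symm

private lemma density_lt (G : SimpleGraph α) [DecidableRel G.Adj] (s t : Finset α)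
    (h : (1 : ℚ)/2 < G.edgeDensity s t) : s.card * t.card < 2 * EE G s t := by
  have hd : G.edgeDensity s t = ((EE G s t : ℚ)) / ((s.card : ℚ) * t.card) := by
    rw [SimpleGraph.edgeDensity, Rel.edgeDensity, card_interedges_eq]
  rw [hd] at h
  rcases Nat.eq_zero_or_pos (s.card * t.card) with h0 | hpos
  · rw [show ((s.card : ℚ) * t.card) = ((s.card * t.card : ℕ) : ℚ) by push_cast; ring, h0] at h
    norm_num at h
  · have hpos' : (0 : ℚ) < (s.card : ℚ) * t.card := by
      have : (0 : ℚ) < ((s.card * t.card : ℕ) : ℚ) := by exact_mod_cast hpos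
      push_cast at this; linarith
    rw [div_lt_div_iff₀ (by norm_num) hpos'] at h
    have : (s.card : ℚ) * t.card < 2 * EE G s t := by linarith
    exact_mod_cast this

private lemma EE_split_src (G : SimpleGraph α) [DecidableRel G.Adj] (v : α) (s t : Finset α) :
    EE G s t = EE G (s.filter (G.Adj v)) t + EE G (s.filter (fun z => ¬ G.Adj v z)) t := by
  unfold EE
  rw [Finset.sum_filter_add_sum_filter_not]

private lemma EE_split_tgt (G : SimpleGraph α) [DecidableRel G.Adj] (v : α) (s t : Finset α) :
    EE G s t = EE G s (t.filter (G.Adj v)) + EE G s (t.filter (fun z => ¬ G.Adj v z)) := by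
  unfold EE
  rw [← Finset.sum_add_distrib]
  refine Finset.sum_congr rfl fun z _ => ?_
  rw [Finset.filter_comm, Finset.filter_comm (fun u => ¬ G.Adj v u) (G.Adj z) t]
  exact (Finset.card_filter_add_card_filter_not (s := t.filter (G.Adj z))
    (p := G.Adj v)).symm

private lemma EE_AA (G : SimpleGraph α) [DecidableRel G.Adj] (hfree : G.CliqueFree 3) (v : α)
    (s t : Finset α) : EE G (s.filter (G.Adj v)) (t.filter (G.Adj v)) = 0 := by
  unfold EE
  refine Finset.sum_eq_zero fun z hz => ?_
  rw [Finset.card_eq_zero, Finset.filter_eq_empty_iff]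
  intro u hu hadj
  exact hfree {v, z, u} (SimpleGraph.is3Clique_triple_iff.mpr
    ⟨(Finset.mem_filter.mp hz).2, (Finset.mem_filter.mp hu).2, hadj⟩)

private lemma EE_M (G : SimpleGraph α) [DecidableRel G.Adj] (X T : Finset α) :
    EE G T X + (∑ z ∈ T, (X.filter (fun a => ¬ G.Adj z a)).card) = T.card * X.card := by
  unfold EE
  rw [← Finset.sum_add_distrib]
  calc ∑ z ∈ T, ((X.filter (G.Adj z)).card + (X.filter (fun a => ¬ G.Adj z a)).card)
      = ∑ _z ∈ T, X.card :=
        Finset.sum_congr rfl fun z _ => Finset.card_filter_add_card_filter_not _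
    _ = T.card * X.card := by rw [Finset.sum_const, smul_eq_mul]

private lemma per_edge (G : SimpleGraph α) [DecidableRel G.Adj] (hfree : G.CliqueFree 3)
    (A : Finset α) {z u : α} (hzu : G.Adj z u) :
    A.card ≤ (A.filter (fun a => ¬ G.Adj z a)).card + (A.filter (fun a => ¬ G.Adj u a)).card := by
  have hdisj : Disjoint (A.filter (fun a => G.Adj z a)) (A.filter (fun a => G.Adj u a)) := by
    rw [Finset.disjoint_left]
    intro a ha1 ha2
    rw [Finset.mem_filter] at ha1 ha2
    exact hfree {z, u, a} (SimpleGraph.is3Clique_triple_iff.mpr ⟨hzu, ha1.2, ha2.2⟩)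
  have hsub : (A.filter (fun a => G.Adj z a)) ∪ (A.filter (fun a => G.Adj u a)) ⊆ A :=
    Finset.union_subset (Finset.filter_subset _ _) (Finset.filter_subset _ _)
  have hcard := Finset.card_union_of_disjoint hdisj
  have hle := Finset.card_le_card hsub
  have e1 := Finset.card_filter_add_card_filter_not (s := A) (p := fun a => G.Adj z a)
  have e2 := Finset.card_filter_add_card_filter_not (s := A) (p := fun a => G.Adj u a)
  omega

private lemma apex (G : SimpleGraph α) [DecidableRel G.Adj] (hfree : G.CliqueFree 3)
    (A B C : Finset α) :
    A.card * EE G B C ≤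
      C.card * (∑ z ∈ B, (A.filter (fun a => ¬ G.Adj z a)).card)
      + B.card * (∑ u ∈ C, (A.filter (fun a => ¬ G.Adj u a)).card) := by
  unfold EE
  rw [Finset.mul_sum]
  calc ∑ z ∈ B, A.card * (C.filter (G.Adj z)).card
      ≤ ∑ z ∈ B, ∑ u ∈ C, ((A.filter (fun a => ¬ G.Adj z a)).card
          + (A.filter (fun a => ¬ G.Adj u a)).card) := by
        refine Finset.sum_le_sum fun z _ => ?_
        calc A.card * (C.filter (G.Adj z)).card
            = ∑ _u ∈ C.filter (G.Adj z), A.card := by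
              rw [Finset.sum_const, smul_eq_mul, mul_comm]
          _ ≤ ∑ u ∈ C.filter (G.Adj z), ((A.filter (fun a => ¬ G.Adj z a)).card
                + (A.filter (fun a => ¬ G.Adj u a)).card) := by
              refine Finset.sum_le_sum fun u hu => ?_
              exact per_edge G hfree A (Finset.mem_filter.mp hu).2
          _ ≤ ∑ u ∈ C, ((A.filter (fun a => ¬ G.Adj z a)).card
                + (A.filter (fun a => ¬ G.Adj u a)).card) :=
              Finset.sum_le_sum_of_subset (Finset.filter_subset _ _)
    _ = C.card * (∑ z ∈ B, (A.filter (fun a => ¬ G.Adj z a)).card)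
          + B.card * (∑ u ∈ C, (A.filter (fun a => ¬ G.Adj u a)).card) := by
        simp_rw [Finset.sum_add_distrib, Finset.sum_const, smul_eq_mul]
        rw [← Finset.mul_sum]

set_option maxHeartbeats 1000000 in
private lemma master (p1 p2 p3 q1 q2 q3 e12a e12b e13a e13b e23a e23b z12 z13 z23
    M12 M21 M13 M31 M23 M32 n12 n13 n23 : ℤ)
    (hM12 : 0 ≤ M12) (hM21 : 0 ≤ M21) (hM13 : 0 ≤ M13) (hM31 : 0 ≤ M31)
    (hM23 : 0 ≤ M23) (hM32 : 0 ≤ M32)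
    (hn12 : 0 ≤ n12) (hn13 : 0 ≤ n13) (hn23 : 0 ≤ n23)
    (hz12 : 0 ≤ z12) (hz13 : 0 ≤ z13) (hz23 : 0 ≤ z23)
    (he12a : 0 ≤ e12a) (he12b : 0 ≤ e12b) (he13a : 0 ≤ e13a) (he13b : 0 ≤ e13b)
    (he23a : 0 ≤ e23a) (he23b : 0 ≤ e23b)
    (hq1 : 0 ≤ q1) (hq2 : 0 ≤ q2) (hq3 : 0 ≤ q3)
    (hp1 : q1 + 1 ≤ p1) (hp2 : q2 + 1 ≤ p2) (hp3 : q3 + 1 ≤ p3)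
    (hB12 : (p1+q1)*(p2+q2) + 1 ≤ 2*(e12a+e12b+z12))
    (hB13 : (p1+q1)*(p3+q3) + 1 ≤ 2*(e13a+e13b+z13))
    (hB23 : (p2+q2)*(p3+q3) + 1 ≤ 2*(e23a+e23b+z23))
    (IM12 : e12a + M12 = q2*p1) (IM21 : e12b + M21 = q1*p2)
    (IM13 : e13a + M13 = q3*p1) (IM31 : e13b + M31 = q1*p3)
    (IM23 : e23a + M23 = q3*p2) (IM32 : e23b + M32 = q2*p3)
    (Iz12 : z12 + n12 = q1*q2) (Iz13 : z13 + n13 = q1*q3) (Iz23 : z23 + n23 = q2*q3)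
    (hA1 : p1*z23 ≤ q3*M12 + q2*M13) (hA2 : p2*z13 ≤ q3*M21 + q1*M23)
    (hA3 : p3*z12 ≤ q2*M31 + q1*M32) : False := by
  have h0p1 : (0:ℤ) ≤ p1 := by linarith
  have h0p2 : (0:ℤ) ≤ p2 := by linarith
  have h0p3 : (0:ℤ) ≤ p3 := by linarith
  rcases eq_or_lt_of_le hq1 with h1|h1
  · have hq10 : q1 = 0 := h1.symm
    subst hq10
    have he12b0 : e12b ≤ 0 := by linarith
    have hz120 : z12 ≤ 0 := by linarith
    have hint := mul_le_mul_of_nonneg_left hp2 h0p1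
    linarith [hint, hB12, IM12]
  rcases eq_or_lt_of_le hq2 with h2|h2
  · have hq20 : q2 = 0 := h2.symm
    subst hq20
    have he12a0 : e12a ≤ 0 := by linarith
    have hz120 : z12 ≤ 0 := by linarith [Iz12]
    have hint := mul_le_mul_of_nonneg_left hp1 h0p2
    linarith [hint, hB12, IM21]
  rcases eq_or_lt_of_le hq3 with h3|h3
  · have hq30 : q3 = 0 := h3.symm
    subst hq30
    have he13a0 : e13a ≤ 0 := by linarith
    have hz130 : z13 ≤ 0 := by linarith [Iz13]
    have hint := mul_le_mul_of_nonneg_left hp1 h0p3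
    linarith [hint, hB13, IM31]
  have hq1' : (1:ℤ) ≤ q1 := h1
  have hq2' : (1:ℤ) ≤ q2 := h2
  have hq3' : (1:ℤ) ≤ q3 := h3
  have hB12' : 2*M12 + 2*M21 + 2*n12 + 1 ≤ p1*q2 + p2*q1 + q1*q2 - p1*p2 := by
    linarith [hB12, IM12, IM21, Iz12]
  have hB13' : 2*M13 + 2*M31 + 2*n13 + 1 ≤ p1*q3 + p3*q1 + q1*q3 - p1*p3 := by
    linarith [hB13, IM13, IM31, Iz13]
  have hB23' : 2*M23 + 2*M32 + 2*n23 + 1 ≤ p2*q3 + p3*q2 + q2*q3 - p2*p3 := by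
    linarith [hB23, IM23, IM32, Iz23]
  have T12 := mul_le_mul_of_nonneg_left hB12' hq3
  have T13 := mul_le_mul_of_nonneg_left hB13' hq2
  have T23 := mul_le_mul_of_nonneg_left hB23' hq1
  have S1 : p1*z23 + p1*n23 = p1*(q2*q3) := by rw [← mul_add, Iz23]
  have S2 : p2*z13 + p2*n13 = p2*(q1*q3) := by rw [← mul_add, Iz13]
  have S3 : p3*z12 + p3*n12 = p3*(q1*q2) := by rw [← mul_add, Iz12]
  have U1 : 0 ≤ (q2*q3 - n23)*(p1 - q1) := mul_nonneg (by linarith) (by linarith)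
  have U2 : 0 ≤ (q1*q3 - n13)*(p2 - q2) := mul_nonneg (by linarith) (by linarith)
  have U3 : 0 ≤ (q1*q2 - n12)*(p3 - q3) := mul_nonneg (by linarith) (by linarith)
  have m12 : (1:ℤ)*1 ≤ (p1-q1)*(p2-q2) :=
    mul_le_mul (by linarith) (by linarith) (by norm_num) (by linarith)
  have m13 : (1:ℤ)*1 ≤ (p1-q1)*(p3-q3) :=
    mul_le_mul (by linarith) (by linarith) (by norm_num) (by linarith)
  have m23 : (1:ℤ)*1 ≤ (p2-q2)*(p3-q3) :=
    mul_le_mul (by linarith) (by linarith) (by norm_num) (by linarith)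
  have W12 := mul_le_mul_of_nonneg_left m12 hq3
  have W13 := mul_le_mul_of_nonneg_left m13 hq2
  have W23 := mul_le_mul_of_nonneg_left m23 hq1
  linarith [T12, T13, T23, S1, S2, S3, U1, U2, U3, W12, W13, W23, hA1, hA2, hA3,
    hq1', hq2', hq3']


private lemma masterN (p1 p2 p3 q1 q2 q3 e12a e12b e13a e13b e23a e23b z12 z13 z23
    M12 M21 M13 M31 M23 M32 n12 n13 n23 : ℕ)
    (hp1 : q1 + 1 ≤ p1) (hp2 : q2 + 1 ≤ p2) (hp3 : q3 + 1 ≤ p3)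
    (hB12 : (p1+q1)*(p2+q2) + 1 ≤ 2*(e12a+e12b+z12))
    (hB13 : (p1+q1)*(p3+q3) + 1 ≤ 2*(e13a+e13b+z13))
    (hB23 : (p2+q2)*(p3+q3) + 1 ≤ 2*(e23a+e23b+z23))
    (IM12 : e12a + M12 = q2*p1) (IM21 : e12b + M21 = q1*p2)
    (IM13 : e13a + M13 = q3*p1) (IM31 : e13b + M31 = q1*p3)
    (IM23 : e23a + M23 = q3*p2) (IM32 : e23b + M32 = q2*p3)
    (Iz12 : z12 + n12 = q1*q2) (Iz13 : z13 + n13 = q1*q3) (Iz23 : z23 + n23 = q2*q3)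
    (hA1 : p1*z23 ≤ q3*M12 + q2*M13) (hA2 : p2*z13 ≤ q3*M21 + q1*M23)
    (hA3 : p3*z12 ≤ q2*M31 + q1*M32) : False := by
  refine master (p1 : ℤ) p2 p3 q1 q2 q3 e12a e12b e13a e13b e23a e23b z12 z13 z23
    M12 M21 M13 M31 M23 M32 n12 n13 n23
    (Int.natCast_nonneg _) (Int.natCast_nonneg _) (Int.natCast_nonneg _)
    (Int.natCast_nonneg _) (Int.natCast_nonneg _) (Int.natCast_nonneg _)
    (Int.natCast_nonneg _) (Int.natCast_nonneg _) (Int.natCast_nonneg _)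
    (Int.natCast_nonneg _) (Int.natCast_nonneg _) (Int.natCast_nonneg _)
    (Int.natCast_nonneg _) (Int.natCast_nonneg _) (Int.natCast_nonneg _)
    (Int.natCast_nonneg _) (Int.natCast_nonneg _) (Int.natCast_nonneg _)
    (Int.natCast_nonneg _) (Int.natCast_nonneg _) (Int.natCast_nonneg _)
    ?_ ?_ ?_ ?_ ?_ ?_ ?_ ?_ ?_ ?_ ?_ ?_ ?_ ?_ ?_ ?_ ?_ ?_
  all_goals exact_mod_cast ‹_›

private lemma key (G : SimpleGraph α) [DecidableRel G.Adj] (hfree : G.CliqueFree 3) (v : α)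
    (U1 U2 U3 : Finset α)
    (h1 : U1.card < 2 * (U1.filter (G.Adj v)).card)
    (h2 : U2.card < 2 * (U2.filter (G.Adj v)).card)
    (h3 : U3.card < 2 * (U3.filter (G.Adj v)).card)
    (h12 : U1.card * U2.card < 2 * EE G U1 U2)
    (h13 : U1.card * U3.card < 2 * EE G U1 U3)
    (h23 : U2.card * U3.card < 2 * EE G U2 U3) : False := by
  set A1 := U1.filter (G.Adj v) with hA1
  set B1 := U1.filter (fun z => ¬ G.Adj v z) with hB1
  set A2 := U2.filter (G.Adj v) with hA2
  set B2 := U2.filter (fun z => ¬ G.Adj v z) with hB2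
  set A3 := U3.filter (G.Adj v) with hA3
  set B3 := U3.filter (fun z => ¬ G.Adj v z) with hB3
  -- cardinal decompositions
  have hc1 : A1.card + B1.card = U1.card :=
    Finset.card_filter_add_card_filter_not _
  have hc2 : A2.card + B2.card = U2.card :=
    Finset.card_filter_add_card_filter_not _
  have hc3 : A3.card + B3.card = U3.card :=
    Finset.card_filter_add_card_filter_not _
  -- edge decompositions
  have d12 : EE G U1 U2 = EE G B2 A1 + (EE G B1 A2 + EE G B1 B2) := by
    rw [hA1, hB1, hA2, hB2,
      EE_split_src G v U1 U2,
      EE_split_tgt G v (U1.filter (G.Adj v)) U2,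
      EE_split_tgt G v (U1.filter (fun z => ¬ G.Adj v z)) U2,
      EE_AA G hfree v U1 U2,
      EE_comm G (U1.filter (G.Adj v)) (U2.filter (fun z => ¬ G.Adj v z))]
    omega
  have d13 : EE G U1 U3 = EE G B3 A1 + (EE G B1 A3 + EE G B1 B3) := by
    rw [hA1, hB1, hA3, hB3,
      EE_split_src G v U1 U3,
      EE_split_tgt G v (U1.filter (G.Adj v)) U3,
      EE_split_tgt G v (U1.filter (fun z => ¬ G.Adj v z)) U3,
      EE_AA G hfree v U1 U3,
      EE_comm G (U1.filter (G.Adj v)) (U3.filter (fun z => ¬ G.Adj v z))]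
    omega
  have d23 : EE G U2 U3 = EE G B3 A2 + (EE G B2 A3 + EE G B2 B3) := by
    rw [hA2, hB2, hA3, hB3,
      EE_split_src G v U2 U3,
      EE_split_tgt G v (U2.filter (G.Adj v)) U3,
      EE_split_tgt G v (U2.filter (fun z => ¬ G.Adj v z)) U3,
      EE_AA G hfree v U2 U3,
      EE_comm G (U2.filter (G.Adj v)) (U3.filter (fun z => ¬ G.Adj v z))]
    omega
  -- missing-edge counts
  set M12 := ∑ z ∈ B2, (A1.filter (fun a => ¬ G.Adj z a)).card with hM12
  set M21 := ∑ z ∈ B1, (A2.filter (fun a => ¬ G.Adj z a)).card with hM21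
  set M13 := ∑ z ∈ B3, (A1.filter (fun a => ¬ G.Adj z a)).card with hM13
  set M31 := ∑ z ∈ B1, (A3.filter (fun a => ¬ G.Adj z a)).card with hM31
  set M23 := ∑ z ∈ B3, (A2.filter (fun a => ¬ G.Adj z a)).card with hM23
  set M32 := ∑ z ∈ B2, (A3.filter (fun a => ¬ G.Adj z a)).card with hM32
  set n12 := ∑ z ∈ B1, (B2.filter (fun a => ¬ G.Adj z a)).card with hn12
  set n13 := ∑ z ∈ B1, (B3.filter (fun a => ¬ G.Adj z a)).card with hn13
  set n23 := ∑ z ∈ B2, (B3.filter (fun a => ¬ G.Adj z a)).card with hn23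
  have IM12 : EE G B2 A1 + M12 = B2.card * A1.card := EE_M G A1 B2
  have IM21 : EE G B1 A2 + M21 = B1.card * A2.card := EE_M G A2 B1
  have IM13 : EE G B3 A1 + M13 = B3.card * A1.card := EE_M G A1 B3
  have IM31 : EE G B1 A3 + M31 = B1.card * A3.card := EE_M G A3 B1
  have IM23 : EE G B3 A2 + M23 = B3.card * A2.card := EE_M G A2 B3
  have IM32 : EE G B2 A3 + M32 = B2.card * A3.card := EE_M G A3 B2
  have Iz12 : EE G B1 B2 + n12 = B1.card * B2.card := EE_M G B2 B1
  have Iz13 : EE G B1 B3 + n13 = B1.card * B3.card := EE_M G B3 B1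
  have Iz23 : EE G B2 B3 + n23 = B2.card * B3.card := EE_M G B3 B2
  have HA1 : A1.card * EE G B2 B3 ≤ B3.card * M12 + B2.card * M13 := apex G hfree A1 B2 B3
  have HA2 : A2.card * EE G B1 B3 ≤ B3.card * M21 + B1.card * M23 := apex G hfree A2 B1 B3
  have HA3 : A3.card * EE G B1 B2 ≤ B2.card * M31 + B1.card * M32 := apex G hfree A3 B1 B2
  -- numeric facts
  have hp1 : B1.card + 1 ≤ A1.card := by omega
  have hp2 : B2.card + 1 ≤ A2.card := by omega
  have hp3 : B3.card + 1 ≤ A3.card := by omega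
  have HB12 : (A1.card + B1.card) * (A2.card + B2.card) + 1
      ≤ 2 * (EE G B2 A1 + EE G B1 A2 + EE G B1 B2) := by rw [hc1, hc2]; omega
  have HB13 : (A1.card + B1.card) * (A3.card + B3.card) + 1
      ≤ 2 * (EE G B3 A1 + EE G B1 A3 + EE G B1 B3) := by rw [hc1, hc3]; omega
  have HB23 : (A2.card + B2.card) * (A3.card + B3.card) + 1
      ≤ 2 * (EE G B3 A2 + EE G B2 A3 + EE G B2 B3) := by rw [hc2, hc3]; omega
  exact masterN A1.card A2.card A3.card B1.card B2.card B3.card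
    (EE G B2 A1) (EE G B1 A2) (EE G B3 A1) (EE G B1 A3) (EE G B3 A2) (EE G B2 A3)
    (EE G B1 B2) (EE G B1 B3) (EE G B2 B3)
    M12 M21 M13 M31 M23 M32 n12 n13 n23
    hp1 hp2 hp3 HB12 HB13 HB23 IM12 IM21 IM13 IM31 IM23 IM32 Iz12 Iz13 Iz23 HA1 HA2 HA3

end TriangleAux

theorem stmt0 {α : Type*} [Fintype α] [DecidableEq α]
    (G : SimpleGraph α) [DecidableRel G.Adj] (V : Fin 4 → Finset α)
    (hpart : ∀ v : α, ∃! i, v ∈ V i)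
    (hind : ∀ i, ∀ x ∈ V i, ∀ y ∈ V i, ¬ G.Adj x y)
    (hone : (V 0).card = 1)
    (hdens : ∀ i j, i ≠ j → (1 : ℚ) / 2 < G.edgeDensity (V i) (V j)) :
    ¬ G.CliqueFree 3 := by
  intro hfree
  obtain ⟨v, hv⟩ := Finset.card_eq_one.mp hone
  have hEsing : ∀ U : Finset α, EE G (V 0) U = (U.filter (G.Adj v)).card := by
    intro U
    unfold EE
    rw [hv, Finset.sum_singleton]
  have hd0 : ∀ i : Fin 4, i ≠ 0 → (V i).card < 2 * ((V i).filter (G.Adj v)).card := by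
    intro i hi
    have h := density_lt G (V 0) (V i) (hdens 0 i (Ne.symm hi))
    rw [hEsing, hone, one_mul] at h
    exact h
  exact key G hfree v (V 1) (V 2) (V 3)
    (hd0 1 (by decide)) (hd0 2 (by decide)) (hd0 3 (by decide))
    (density_lt G (V 1) (V 2) (hdens 1 2 (by decide)))
    (density_lt G (V 1) (V 3) (hdens 1 3 (by decide)))
    (density_lt G (V 2) (V 3) (hdens 2 3 (by decide)))
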